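/- Let (K,|·|) be a normed field, n ≥ 2, u, v ∈ Kⁿ with 1 ≤ p ≤ ∞, and suppose v has pairwise distinct components. Then for every index i, d_i(u) ≥ (1 − 2^{1/q} · ‖(u − v)/d(v)‖_p) · d_i(v), where q is the conjugate exponent of p. -/

import Mathlib

open Finset Filter Topology
open scoped ENNReal

noncomputable def pnorm {n : ℕ} (p : ℝ≥0∞) (v : Fin n → ℝ) : ℝ :=
  if p = ⊤ then ⨆ i, |v i| else (∑ i, |v i| ^ p.toReal) ^ (1 / p.toReal)

noncomputable def epow (a : ℝ) (p : ℝ≥0∞) : ℝ :=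
  if p = ⊤ then 1 else a ^ (1 / p.toReal)

noncomputable def dsep {K : Type*} [NormedField K] {n : ℕ} (x : Fin n → K) (i : Fin n) : ℝ :=
  sInf {r : ℝ | ∃ j, j ≠ i ∧ r = ‖x i - x j‖}

noncomputable def Wcorr {K : Type*} [NormedField K] {n : ℕ} (f : Polynomial K)
    (x : Fin n → K) (i : Fin n) : K :=
  Polynomial.eval (x i) f / (f.leadingCoeff * ∏ j ∈ Finset.univ.erase i, (x i - x j))

def IsRootVector {K : Type*} [NormedField K] {n : ℕ} (f : Polynomial K) (ξ : Fin n → K) : Prop :=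
  ∀ z : K, Polynomial.eval z f = f.leadingCoeff * ∏ i, (z - ξ i)

section Aux

lemma two_term_aux (a b pr : ℝ) (ha : 0 ≤ a) (hb : 0 ≤ b) (hpr : 1 ≤ pr) :
    a + b ≤ 2 ^ (1 - 1/pr) * (a ^ pr + b ^ pr) ^ (1/pr) := by
  have h0 : (0:ℝ) < pr := lt_of_lt_of_le one_pos hpr
  have h := NNReal.rpow_add_le_mul_rpow_add_rpow a.toNNReal b.toNNReal hpr
  have h2 := NNReal.rpow_le_rpow h (le_of_lt (by positivity : (0:ℝ) < 1/pr))
  rw [← NNReal.rpow_mul, mul_one_div, div_self (ne_of_gt h0), NNReal.rpow_one,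
    NNReal.mul_rpow, ← NNReal.rpow_mul] at h2
  have e : (pr - 1) * (1/pr) = 1 - 1/pr := by field_simp
  rw [e] at h2
  have := NNReal.coe_le_coe.2 h2
  push_cast [NNReal.coe_rpow, Real.coe_toNNReal _ ha, Real.coe_toNNReal _ hb] at this
  convert this using 2

lemma pair_le_aux {n : ℕ} (a : Fin n → ℝ) (ha : ∀ k, 0 ≤ a k) {i j : Fin n} (hij : i ≠ j)
    (p q : ℝ≥0∞) (hp : 1 ≤ p) (hpq : 1 / p + 1 / q = 1) :
    a i + a j ≤ epow 2 q * pnorm p a := by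
  simp only [one_div] at hpq
  by_cases hpt : p = ⊤
  · have hq1 : q = 1 := by
      rw [hpt] at hpq; simpa using hpq
    have hbdd : BddAbove (Set.range fun k => |a k|) := Set.Finite.bddAbove (Set.finite_range _)
    have hi : a i ≤ ⨆ k, |a k| := (le_abs_self _).trans (le_ciSup hbdd i)
    have hj : a j ≤ ⨆ k, |a k| := (le_abs_self _).trans (le_ciSup hbdd j)
    have : epow 2 q = 2 := by simp [epow, hq1]
    rw [this, pnorm, if_pos hpt, two_mul]
    exact add_le_add hi hj
  · set pr := p.toReal with hpr
    have hpr1 : 1 ≤ pr := by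
      have := ENNReal.toReal_mono hpt hp
      simpa using this
    have hpr0 : 0 < pr := lt_of_lt_of_le one_pos hpr1
    have hepow : epow 2 q = 2 ^ (1 - 1/pr) := by
      by_cases hqt : q = ⊤
      · have hp1 : p = 1 := by
          rw [hqt] at hpq; simpa using hpq
        simp [epow, hqt, hpr, hp1]
      · have hq0 : q ≠ 0 := by
          intro h; rw [h] at hpq; simp at hpq
        have hqinv : q⁻¹ = 1 - p⁻¹ := by
          rw [add_comm] at hpq
          exact ENNReal.eq_sub_of_add_eq (ENNReal.inv_ne_top.2 (zero_lt_one.trans_le hp).ne') hpq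
        have hple : p⁻¹ ≤ 1 := ENNReal.inv_le_one.2 hp
        have : q⁻¹.toReal = 1 - p⁻¹.toReal := by
          rw [hqinv, ENNReal.toReal_sub_of_le hple (by simp)]; simp
        rw [ENNReal.toReal_inv, ENNReal.toReal_inv] at this
        rw [epow, if_neg hqt, one_div, this, one_div, hpr]
    have key := two_term_aux (a i) (a j) pr (ha i) (ha j) hpr1
    have hsum : a i ^ pr + a j ^ pr ≤ ∑ k, |a k| ^ pr := by
      have : a i ^ pr + a j ^ pr = ∑ k ∈ ({i, j} : Finset (Fin n)), |a k| ^ pr := by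
        rw [Finset.sum_insert (by simpa using hij), Finset.sum_singleton,
          abs_of_nonneg (ha i), abs_of_nonneg (ha j)]
      rw [this]
      exact Finset.sum_le_sum_of_subset_of_nonneg (Finset.subset_univ _)
        (fun k _ _ => Real.rpow_nonneg (abs_nonneg _) _)
    have h2 : (a i ^ pr + a j ^ pr) ^ (1/pr) ≤ (∑ k, |a k| ^ pr) ^ (1/pr) :=
      Real.rpow_le_rpow (add_nonneg (Real.rpow_nonneg (ha i) _) (Real.rpow_nonneg (ha j) _))
        hsum (by positivity)
    calc a i + a j ≤ 2 ^ (1 - 1/pr) * (a i ^ pr + a j ^ pr) ^ (1/pr) := key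
      _ ≤ 2 ^ (1 - 1/pr) * (∑ k, |a k| ^ pr) ^ (1/pr) :=
          mul_le_mul_of_nonneg_left h2 (by positivity)
      _ = epow 2 q * pnorm p a := by rw [hepow, pnorm, if_neg hpt]

variable {K : Type*} [NormedField K] {n : ℕ}

lemma dsep_set_finite (x : Fin n → K) (i : Fin n) :
    {r : ℝ | ∃ j, j ≠ i ∧ r = ‖x i - x j‖}.Finite := by
  have : {r : ℝ | ∃ j, j ≠ i ∧ r = ‖x i - x j‖} =
      (fun j => ‖x i - x j‖) '' {j | j ≠ i} := by
    ext r; simp [eq_comm]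
  rw [this]; exact (Set.toFinite _).image _

lemma dsep_set_nonempty (hn : 2 ≤ n) (x : Fin n → K) (i : Fin n) :
    {r : ℝ | ∃ j, j ≠ i ∧ r = ‖x i - x j‖}.Nonempty := by
  obtain ⟨j, hj⟩ := Fintype.exists_ne_of_one_lt_card (by simp only [Fintype.card_fin]; omega) i
  exact ⟨‖x i - x j‖, j, hj, rfl⟩

lemma dsep_le_aux (x : Fin n → K) {i j : Fin n} (hj : j ≠ i) : dsep x i ≤ ‖x i - x j‖ :=
  csInf_le (dsep_set_finite x i).bddBelow ⟨j, hj, rfl⟩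

lemma dsep_nonneg_aux (hn : 2 ≤ n) (x : Fin n → K) (i : Fin n) : 0 ≤ dsep x i :=
  le_csInf (dsep_set_nonempty hn x i) (by rintro r ⟨j, hj, rfl⟩; exact norm_nonneg _)

lemma dsep_pos_aux (hn : 2 ≤ n) {x : Fin n → K} (hx : Function.Injective x) (i : Fin n) :
    0 < dsep x i := by
  have hmem := (dsep_set_nonempty hn x i).csInf_mem (dsep_set_finite x i)
  obtain ⟨j, hj, he⟩ := hmem
  rw [dsep, he]
  rw [norm_pos_iff, sub_ne_zero]
  exact fun h => hj (hx h.symm)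

end Aux

/-- If `v ∈ Kⁿ` has pairwise distinct components, then for every `i`,
`d_i(u) ≥ (1 − 2^{1/q}·‖(u−v)/d(v)‖_p)·d_i(v)`. -/
theorem dsep_lower_bound {K : Type*} [NormedField K] {n : ℕ} (hn : 2 ≤ n)
    (u v : Fin n → K) (hv : Function.Injective v)
    (p q : ℝ≥0∞) (hp : 1 ≤ p) (hpq : 1 / p + 1 / q = 1) :
    ∀ i : Fin n,
      (1 - epow 2 q * pnorm p (fun j => ‖u j - v j‖ / dsep v j)) * dsep v i ≤ dsep u i := by
  intro i
  set a : Fin n → ℝ := fun j => ‖u j - v j‖ / dsep v j with hadef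
  have ha : ∀ k, 0 ≤ a k := fun k => div_nonneg (norm_nonneg _) (dsep_nonneg_aux hn v k)
  set E : ℝ := epow 2 q * pnorm p a with hE
  have hdu : 0 ≤ dsep u i := dsep_nonneg_aux hn u i
  rcases le_or_gt (1 - E) 0 with hc0 | hc0
  · exact le_trans (mul_nonpos_of_nonpos_of_nonneg hc0 (dsep_nonneg_aux hn v i)) hdu
  · apply le_csInf (dsep_set_nonempty hn u i)
    rintro r ⟨j, hj, rfl⟩
    have hvij : dsep v i ≤ ‖v i - v j‖ := dsep_le_aux v hj
    have hvji : dsep v j ≤ ‖v i - v j‖ := by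
      rw [norm_sub_rev]; exact dsep_le_aux v (Ne.symm hj)
    have hai : ‖u i - v i‖ = a i * dsep v i := by
      rw [hadef]; field_simp [(dsep_pos_aux hn hv i).ne']
    have haj : ‖u j - v j‖ = a j * dsep v j := by
      rw [hadef]; field_simp [(dsep_pos_aux hn hv j).ne']
    have f3 : ‖u i - v i‖ ≤ a i * ‖v i - v j‖ := by
      rw [hai]; exact mul_le_mul_of_nonneg_left hvij (ha i)
    have f4 : ‖u j - v j‖ ≤ a j * ‖v i - v j‖ := by
      rw [haj]; exact mul_le_mul_of_nonneg_left hvji (ha j)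
    have f5 : ‖v i - v j‖ ≤ ‖u i - u j‖ + ‖u i - v i‖ + ‖u j - v j‖ := by
      have : v i - v j = (u i - u j) - (u i - v i) + (u j - v j) := by ring
      rw [this]
      exact (norm_add_le _ _).trans (add_le_add_left (norm_sub_le _ _) _)
    have f2 : a i + a j ≤ E := pair_le_aux a ha (Ne.symm hj) p q hp hpq
    have f2' : (a i + a j) * ‖v i - v j‖ ≤ E * ‖v i - v j‖ :=
      mul_le_mul_of_nonneg_right f2 (norm_nonneg _)
    have f1 : (1 - E) * dsep v i ≤ (1 - E) * ‖v i - v j‖ :=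
      mul_le_mul_of_nonneg_left hvij hc0.le
    nlinarith [f1, f2', f3, f4, f5]
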